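/- Let Ω ⊊ X be an open subset of a geodesic complete metric space, let x₀ ∈ Ω with r₀ = d(x₀, ∂Ω), and let c ≥ 2C₁ for some C₁ ≥ 1. Suppose x ∈ B(x₀, 2r₀) \ Ω and γ: [0,1] → X is a rectifiable curve from x₀ to x satisfying ℓ(γ|_{[t,1]}) ≤ C₁ d(γ(t), x) for all t, and suppose γ is not a c-John curve from x₀. Then there exists t* ∈ (0,1) with γ(t*) ∈ Ω such that (i) d(γ(t*), X\Ω) ≤ (1/c) ℓ(γ|_{[t*,1]}), and (ii) the restriction γ|_{[0,t*]} is a c-John curve from x₀ to γ(t*); moreover d(γ(t*), ∂Ω) ≤ (C₁/c) d(γ(t*), x). -/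

import Mathlib

open Metric Set MeasureTheory ENNReal
open Filter Topology

noncomputable section

namespace Paper

variable {X : Type*}

/-- The subcollection of balls (center, radius pairs) whose ball meets `A`. -/
def restr [MetricSpace X] (C : Set (X × ℝ)) (A : Set X) : Set (X × ℝ) :=
  {B ∈ C | (Metric.ball B.1 B.2 ∩ A).Nonempty}

/-- Total gauge mass of a collection of balls. -/
def gaugeSum (ξ : X → ℝ → ℝ≥0∞) (C : Set (X × ℝ)) : ℝ≥0∞ :=
  ∑' B : C, ξ (B : X × ℝ).1 (B : X × ℝ).2

/-- Hausdorff content at scale `r` with respect to a gauge `ξ`. -/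
def gaugeContent [MetricSpace X] (ξ : X → ℝ → ℝ≥0∞) (r : ℝ) (A : Set X) : ℝ≥0∞ :=
  ⨅ (C : Set (X × ℝ)) (_ : C.Countable) (_ : ∀ B ∈ C, 0 < B.2 ∧ B.2 ≤ r)
    (_ : A ⊆ ⋃ B ∈ C, Metric.ball B.1 B.2), gaugeSum ξ C

/-- A doubling gauge function with constant `D`. -/
def DoublingGauge [MetricSpace X] (ξ : X → ℝ → ℝ≥0∞) (D : ℝ≥0∞) : Prop :=
  (∀ (x : X) (r : ℝ), 0 < r → 0 < ξ x r ∧ ξ x r < ⊤) ∧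
  ∀ (x x' : X) (r r' : ℝ), 0 < r' → r' ≤ r → r ≤ 2 * r' →
    (Metric.ball x' r' ∩ Metric.ball x r).Nonempty →
    ξ x' r' ≤ D * ξ x r ∧ ξ x r ≤ D * ξ x' r'

/-- `X` is metrically `N`-doubling: every ball of radius `r` contains at most `N`
pairwise `r/2`-separated points. -/
def MetricDoubling (X : Type*) [MetricSpace X] (N : ℕ) : Prop :=
  ∀ (x : X) (r : ℝ) (S : Finset X), (↑S ⊆ Metric.ball x r) →
    (∀ y ∈ S, ∀ z ∈ S, y ≠ z → r / 2 ≤ dist y z) → S.card ≤ N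

/-- `μ` is a doubling measure with constant `D`. -/
def DoublingMeasure [MetricSpace X] [MeasurableSpace X] (μ : Measure X) (D : ℝ≥0∞) : Prop :=
  ∀ (x : X) (r : ℝ), 0 < r →
    0 < μ (Metric.ball x r) ∧ μ (Metric.ball x r) < ⊤ ∧
    μ (Metric.ball x (2 * r)) ≤ D * μ (Metric.ball x r)

/-- The codimension-`q` gauge `h_q(B) = μ(B)/rad(B)^q`. -/
def hGauge [MetricSpace X] [MeasurableSpace X] (μ : Measure X) (q : ℝ) (x : X) (r : ℝ) : ℝ≥0∞ :=
  μ (Metric.ball x r) / ENNReal.ofReal (r ^ q)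

/-- Total `h_q` mass of a collection of balls. -/
def hSum [MetricSpace X] [MeasurableSpace X] (μ : Measure X) (q : ℝ) (C : Set (X × ℝ)) : ℝ≥0∞ :=
  ∑' B : C, hGauge μ q (B : X × ℝ).1 (B : X × ℝ).2

/-- `ξ` has codimension at least `Q` (with constant `K`). -/
def HasCodimAtLeast [MetricSpace X] [MeasurableSpace X] (ξ : X → ℝ → ℝ≥0∞)
    (μ : Measure X) (Q : ℝ) (K : ℝ≥0∞) : Prop :=
  ∀ (x : X) (r R : ℝ), 0 < r → r ≤ R →
    ξ x R / ξ x r ≤ K * (hGauge μ Q x R / hGauge μ Q x r)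

/-- `X` is a geodesic space: any two points are joined by a curve of length `dist x y`. -/
def GeodesicSpace (X : Type*) [MetricSpace X] : Prop :=
  ∀ x y : X, ∃ γ : ℝ → X, γ 0 = x ∧ γ 1 = y ∧ ContinuousOn γ (Set.Icc 0 1) ∧
    eVariationOn γ (Set.Icc 0 1) = ENNReal.ofReal (dist x y)

/-- A `c`-John curve on the parameter interval `[a, b]`: every tail subcurve from `γ t`
has length at most `c · d(γ t, ∂Ω)`. -/
def IsJohnCurve [MetricSpace X] (Ω : Set X) (c : ℝ) (γ : ℝ → X) (a b : ℝ) : Prop :=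
  ContinuousOn γ (Set.Icc a b) ∧ eVariationOn γ (Set.Icc a b) < ⊤ ∧
  ∀ t ∈ Set.Icc a b, eVariationOn γ (Set.Icc t b) ≤
    ENNReal.ofReal (c * Metric.infDist (γ t) (frontier Ω))

/-- The `c`-accessible boundary of `Ω` from `x₀`. -/
def accBoundary [MetricSpace X] (Ω : Set X) (x₀ : X) (c : ℝ) : Set X :=
  {w ∈ frontier Ω | ∃ γ : ℝ → X, γ 0 = x₀ ∧ γ 1 = w ∧ IsJohnCurve Ω c γ 0 1}

/-- `g = sup_{B ∈ ℬ} (1/rad B) · 1_{2B}`. -/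
def ballSup [MetricSpace X] (ℬ : Set (X × ℝ)) : X → ℝ≥0∞ :=
  fun w => ⨆ (B : ℬ) (_ : w ∈ Metric.ball (B : X × ℝ).1 (2 * (B : X × ℝ).2)),
    (ENNReal.ofReal (B : X × ℝ).2)⁻¹

/-- The restricted (uncentered) maximal function at scale `s`. -/
def restrMax [MetricSpace X] [MeasurableSpace X] (μ : Measure X) (g : X → ℝ≥0∞)
    (s : ℝ) (x : X) : ℝ≥0∞ :=
  ⨆ (z : X) (ρ : ℝ) (_ : 0 < ρ) (_ : ρ < s) (_ : x ∈ Metric.ball z ρ),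
    (∫⁻ w in Metric.ball z ρ, g w ∂μ) / μ (Metric.ball z ρ)

/-- `g` is an upper gradient of `f`: the upper gradient inequality holds along all
unit-speed (1-Lipschitz) curves. -/
def IsUpperGradient [MetricSpace X] (f : X → ℝ) (g : X → ℝ≥0∞) : Prop :=
  ∀ (L : ℝ) (γ : ℝ → X), 0 ≤ L → LipschitzOnWith 1 γ (Set.Icc 0 L) →
    ENNReal.ofReal |f (γ L) - f (γ 0)| ≤ ∫⁻ t in Set.Icc 0 L, g (γ t)

/-- The `p`-Poincaré inequality with constants `CP, lam`. -/
def PoincareIneq [MetricSpace X] [MeasurableSpace X] (μ : Measure X)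
    (p CP lam : ℝ) : Prop :=
  ∀ (f : X → ℝ) (g : X → ℝ≥0∞), MeasureTheory.LocallyIntegrable f μ → Measurable g →
    IsUpperGradient f g →
    ∀ (x : X) (r : ℝ), 0 < r →
      ⨍ y in Metric.ball x r, |f y - ⨍ w in Metric.ball x r, f w ∂μ| ∂μ ≤
        CP * r * (((∫⁻ w in Metric.ball x (lam * r), g w ^ p ∂μ) /
          μ (Metric.ball x (lam * r))).toReal) ^ (1 / p)

/-- The pointwise `p`-Poincaré inequality with constants `(CP, L, lam)`. -/
def PointwisePoincare [MetricSpace X] [MeasurableSpace X] (μ : Measure X)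
    (p CP L lam : ℝ) : Prop :=
  ∀ (x y : X) (g : X → ℝ≥0∞), Measurable g →
    (⨅ (ℓ : ℝ) (γ : ℝ → X) (_ : 0 ≤ ℓ) (_ : ℓ ≤ L * dist x y)
        (_ : LipschitzOnWith 1 γ (Set.Icc 0 ℓ)) (_ : γ 0 = x) (_ : γ ℓ = y)
        (_ : ∀ t ∈ Set.Icc 0 ℓ, γ t ∈ Metric.ball x (2 * lam * dist x y)),
        ∫⁻ t in Set.Icc 0 ℓ, g (γ t)) ≤
      ENNReal.ofReal (CP * dist x y) *
        (restrMax μ (fun w => g w ^ p) (lam * dist x y) x +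
         restrMax μ (fun w => g w ^ p) (lam * dist x y) y) ^ (1 / p)

/-- The `s`-dimensional Hausdorff content (at scale `∞`). -/
def sContent {Y : Type*} [MetricSpace Y] (s : ℝ) (A : Set Y) : ℝ≥0∞ :=
  ⨅ (t : ℕ → Set Y) (_ : A ⊆ ⋃ n, t n), ∑' n, EMetric.diam (t n) ^ s

end Paper

private lemma cross_frontier {X : Type*} [MetricSpace X]
    (hgeo : Paper.GeodesicSpace X) {Ω : Set X} (hΩ : IsOpen Ω) {z y : X}
    (hz : z ∈ Ω) (hy : y ∉ Ω) : ∃ w ∈ frontier Ω, dist z w ≤ dist z y := by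
  obtain ⟨σ, hσ0, hσ1, hσc, hσv⟩ := hgeo z y
  set K : Set ℝ := {t ∈ Set.Icc (0:ℝ) 1 | σ t ∉ Ω} with hK
  have h1K : (1:ℝ) ∈ K := ⟨⟨zero_le_one, le_refl 1⟩, by rwa [hσ1]⟩
  have hbdd : BddBelow K := ⟨0, fun t ht => ht.1.1⟩
  set s := sInf K with hs
  have hs0 : 0 ≤ s := le_csInf ⟨1, h1K⟩ (fun t ht => ht.1.1)
  have hs1 : s ≤ 1 := csInf_le hbdd h1K
  have hsmem : s ∈ Set.Icc (0:ℝ) 1 := ⟨hs0, hs1⟩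
  have hsnot : σ s ∉ Ω := by
    intro h
    have hpre : σ ⁻¹' Ω ∈ 𝓝[Set.Icc (0:ℝ) 1] s := (hσc s hsmem) (hΩ.mem_nhds h)
    obtain ⟨δ, hδ, hsub⟩ := Metric.mem_nhdsWithin_iff.1 hpre
    have hlow : s + δ ≤ s := by
      apply le_csInf ⟨1, h1K⟩
      intro u hu
      by_contra hlt
      push_neg at hlt
      have hus : s ≤ u := csInf_le hbdd hu
      have : u ∈ Metric.ball s δ ∩ Set.Icc (0:ℝ) 1 := by
        constructor
        · rw [Metric.mem_ball, Real.dist_eq, abs_of_nonneg (by linarith)]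
          linarith
        · exact hu.1
      exact hu.2 (hsub this)
    linarith
  have hspos : 0 < s := by
    rcases lt_or_eq_of_le hs0 with h | h
    · exact h
    · exact absurd (h ▸ (hσ0 ▸ hz)) hsnot
  have hmaps : ∀ t ∈ Set.Ico (0:ℝ) s, σ t ∈ Ω := by
    intro t ht
    by_contra h
    have htK : t ∈ K := ⟨⟨ht.1, ht.2.le.trans hs1⟩, h⟩
    exact absurd (csInf_le hbdd htK) (not_le.2 ht.2)
  have hcl : σ s ∈ closure Ω := by
    have hscl : s ∈ closure (Set.Ico (0:ℝ) s) := by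
      rw [closure_Ico hspos.ne]
      exact ⟨hs0, le_refl s⟩
    have hcw : ContinuousWithinAt σ (Set.Ico (0:ℝ) s) s :=
      (hσc s hsmem).mono (fun t ht => ⟨ht.1, ht.2.le.trans hs1⟩)
    have := hcw.mem_closure_image hscl
    refine closure_mono ?_ this
    rintro w ⟨t, ht, rfl⟩
    exact hmaps t ht
  have hwf : σ s ∈ frontier Ω := by
    rw [frontier, hΩ.interior_eq]
    exact ⟨hcl, hsnot⟩
  refine ⟨σ s, hwf, ?_⟩
  have h1 : edist (σ 0) (σ s) ≤ eVariationOn σ (Set.Icc 0 1) :=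
    eVariationOn.edist_le σ ⟨le_refl 0, zero_le_one⟩ hsmem
  rw [hσ0, hσv] at h1
  rw [edist_dist] at h1
  exact (ENNReal.ofReal_le_ofReal_iff dist_nonneg).1 h1

private lemma infDist_frontier_le {X : Type*} [MetricSpace X]
    (hgeo : Paper.GeodesicSpace X) {Ω : Set X} (hΩ : IsOpen Ω) {z : X}
    (hz : z ∈ Ω) (hne : Ωᶜ.Nonempty) :
    Metric.infDist z (frontier Ω) ≤ Metric.infDist z Ωᶜ := by
  by_contra h
  push_neg at h
  obtain ⟨y, hy, hdy⟩ := (Metric.infDist_lt_iff hne).1 h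
  obtain ⟨w, hw, hdw⟩ := cross_frontier hgeo hΩ hz hy
  exact absurd (Metric.infDist_le_dist_of_mem hw) (not_le.2 (lt_of_le_of_lt hdw hdy))

theorem exit_time_john {X : Type*} [MetricSpace X] [CompleteSpace X]
    (hgeo : Paper.GeodesicSpace X)
    (Ω : Set X) (hΩ : IsOpen Ω) (hproper : Ω ≠ Set.univ)
    (x₀ : X) (hx₀ : x₀ ∈ Ω)
    (C₁ c : ℝ) (hC₁ : 1 ≤ C₁) (hc : 2 * C₁ ≤ c)
    (x : X) (hx : x ∈ Metric.ball x₀ (2 * Metric.infDist x₀ (frontier Ω)) \ Ω)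
    (γ : ℝ → X) (hcont : ContinuousOn γ (Set.Icc 0 1))
    (h0 : γ 0 = x₀) (h1 : γ 1 = x) (hrect : eVariationOn γ (Set.Icc 0 1) < ⊤)
    (htail : ∀ t ∈ Set.Icc (0:ℝ) 1,
      eVariationOn γ (Set.Icc t 1) ≤ ENNReal.ofReal (C₁ * dist (γ t) x))
    (hnotJohn : ¬ Paper.IsJohnCurve Ω c γ 0 1) :
    ∃ t ∈ Set.Ioo (0:ℝ) 1, γ t ∈ Ω ∧
      ENNReal.ofReal (c * Metric.infDist (γ t) Ωᶜ) ≤ eVariationOn γ (Set.Icc t 1) ∧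
      Paper.IsJohnCurve Ω c γ 0 t ∧
      Metric.infDist (γ t) (frontier Ω) ≤ (C₁ / c) * dist (γ t) x := by
  
  classical
  obtain ⟨hxball, hxnot⟩ := hx
  have hC₁0 : (0:ℝ) < C₁ := lt_of_lt_of_le one_pos hC₁
  have hc0 : (0:ℝ) < c := lt_of_lt_of_le (by linarith) hc
  have hcne : Ωᶜ.Nonempty := ⟨x, hxnot⟩
  -- frontier is nonempty
  obtain ⟨w₀, hw₀, -⟩ := cross_frontier hgeo hΩ hx₀ hxnot
  have hfr : (frontier Ω).Nonempty := ⟨w₀, hw₀⟩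
  have hfrc : frontier Ω ⊆ Ωᶜ := by
    intro w hw
    simp only [Set.mem_compl_iff]
    intro hwΩ
    exact Set.eq_empty_iff_forall_notMem.1 hΩ.inter_frontier_eq w ⟨hwΩ, hw⟩
  -- the set S and its infimum
  set S : Set ℝ := {t ∈ Set.Icc (0:ℝ) 1 |
    ENNReal.ofReal (c * Metric.infDist (γ t) Ωᶜ) ≤ eVariationOn γ (Set.Icc t 1)} with hSdef
  have h1S : (1:ℝ) ∈ S := by
    refine ⟨⟨zero_le_one, le_refl 1⟩, ?_⟩
    rw [h1, Metric.infDist_zero_of_mem (show x ∈ Ωᶜ from hxnot), mul_zero, ENNReal.ofReal_zero]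
    exact zero_le
  have hbdd : BddBelow S := ⟨0, fun t ht => ht.1.1⟩
  set t₀ := sInf S with ht₀def
  have ht₀0 : 0 ≤ t₀ := le_csInf ⟨1, h1S⟩ (fun t ht => ht.1.1)
  have ht₀1 : t₀ ≤ 1 := csInf_le hbdd h1S
  have ht₀mem : t₀ ∈ Set.Icc (0:ℝ) 1 := ⟨ht₀0, ht₀1⟩
  have hnotS : ∀ t, t ∈ Set.Icc (0:ℝ) 1 → t < t₀ →
      eVariationOn γ (Set.Icc t 1) < ENNReal.ofReal (c * Metric.infDist (γ t) Ωᶜ) := by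
    intro t ht hlt
    by_contra h
    push_neg at h
    exact absurd (csInf_le hbdd ⟨ht, h⟩) (not_le.2 hlt)
  -- Step A : t₀ ∈ S
  have hAS : ENNReal.ofReal (c * Metric.infDist (γ t₀) Ωᶜ) ≤ eVariationOn γ (Set.Icc t₀ 1) := by
    by_contra hA
    push_neg at hA
    set E := eVariationOn γ (Set.Icc t₀ 1) with hE
    have hEne : E ≠ ⊤ := hA.ne_top
    have hEtlt : E.toReal < c * Metric.infDist (γ t₀) Ωᶜ :=
      (ENNReal.lt_ofReal_iff_toReal_lt hEne).1 hA
    have hgc : ContinuousWithinAt (fun t => c * Metric.infDist (γ t) Ωᶜ)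
        (Set.Icc (0:ℝ) 1) t₀ :=
      (continuous_const.mul (continuous_infDist_pt Ωᶜ)).continuousAt.comp_continuousWithinAt
        (hcont t₀ ht₀mem)
    have hpre : (fun t => c * Metric.infDist (γ t) Ωᶜ) ⁻¹' (Set.Ioi E.toReal) ∈
        𝓝[Set.Icc (0:ℝ) 1] t₀ := hgc (Ioi_mem_nhds hEtlt)
    obtain ⟨δ, hδ, hsub⟩ := Metric.mem_nhdsWithin_iff.1 hpre
    have hlow : t₀ + δ ≤ t₀ := by
      apply le_csInf ⟨1, h1S⟩
      intro u hu
      by_contra hlt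
      push_neg at hlt
      have hut : t₀ ≤ u := csInf_le hbdd hu
      have hub : u ∈ Metric.ball t₀ δ ∩ Set.Icc (0:ℝ) 1 := by
        constructor
        · rw [Metric.mem_ball, Real.dist_eq, abs_of_nonneg (by linarith)]
          linarith
        · exact hu.1
      have hfu : E.toReal < c * Metric.infDist (γ u) Ωᶜ := hsub hub
      have hmono : eVariationOn γ (Set.Icc u 1) ≤ E :=
        eVariationOn.mono γ (Set.Icc_subset_Icc_left hut)
      have := le_trans hu.2 hmono
      rw [← ENNReal.ofReal_toReal hEne, ENNReal.ofReal_le_ofReal_iff ENNReal.toReal_nonneg]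
        at this
      linarith
    linarith
  -- Step B : γ t₀ ∈ Ω
  have hBΩ : γ t₀ ∈ Ω := by
    by_contra hB
    have ht₀pos : 0 < t₀ := by
      rcases lt_or_eq_of_le ht₀0 with h | h
      · exact h
      · exact absurd (h ▸ (h0 ▸ hx₀)) hB
    -- the variation of the tail vanishes
    have hvar0 : eVariationOn γ (Set.Icc t₀ 1) = 0 := by
      have key : ∀ ε : ℝ, 0 < ε → eVariationOn γ (Set.Icc t₀ 1) ≤ ENNReal.ofReal ε := by
        intro ε hεpos
      -- find t < t₀ with γ t close to γ t₀
        have hpre : γ ⁻¹' (Metric.ball (γ t₀) (ε / c)) ∈ 𝓝[Set.Icc (0:ℝ) 1] t₀ :=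
          (hcont t₀ ht₀mem) (Metric.ball_mem_nhds _ (div_pos hεpos hc0))
        obtain ⟨δ, hδ, hsub⟩ := Metric.mem_nhdsWithin_iff.1 hpre
        set t := max (t₀ - δ/2) 0 with htdef
        have htlt : t < t₀ := max_lt (by linarith) ht₀pos
        have htmem : t ∈ Set.Icc (0:ℝ) 1 := ⟨le_max_right _ _, le_trans htlt.le ht₀1⟩
        have htball : t ∈ Metric.ball t₀ δ := by
          rw [Metric.mem_ball, Real.dist_eq, abs_of_nonpos (by linarith)]
          have : t₀ - δ/2 ≤ t := le_max_left _ _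
          linarith
        have hclose : γ t ∈ Metric.ball (γ t₀) (ε / c) := hsub ⟨htball, htmem⟩
        have hlt := hnotS t htmem htlt
        have hd : Metric.infDist (γ t) Ωᶜ ≤ dist (γ t) (γ t₀) :=
          Metric.infDist_le_dist_of_mem (show γ t₀ ∈ Ωᶜ from hB)
        have hd2 : c * Metric.infDist (γ t) Ωᶜ < ε := by
          have := Metric.mem_ball.1 hclose
          have h3 : dist (γ t) (γ t₀) < ε / c := this
          calc c * Metric.infDist (γ t) Ωᶜ ≤ c * dist (γ t) (γ t₀) := by
                exact mul_le_mul_of_nonneg_left hd hc0.le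
            _ < c * (ε / c) := by exact mul_lt_mul_of_pos_left h3 hc0
            _ = ε := by field_simp
        refine le_of_lt ?_
        calc eVariationOn γ (Set.Icc t₀ 1)
            ≤ eVariationOn γ (Set.Icc t 1) :=
              eVariationOn.mono γ (Set.Icc_subset_Icc_left htlt.le)
          _ < ENNReal.ofReal (c * Metric.infDist (γ t) Ωᶜ) := hlt
          _ ≤ ENNReal.ofReal ε := ENNReal.ofReal_le_ofReal hd2.le
      refine le_antisymm ?_ (zero_le)
      refine ENNReal.le_of_forall_pos_le_add fun ε hε _ => ?_
      rw [zero_add, ← ENNReal.ofReal_coe_nnreal]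
      exact key ε (NNReal.coe_pos.2 hε)
    -- build a John curve on [0,1], contradiction
    apply hnotJohn
    refine ⟨hcont, hrect, ?_⟩
    intro t ht
    rcases lt_or_ge t t₀ with hlt | hge
    · have h1 := hnotS t ht hlt
      have h2 : Metric.infDist (γ t) Ωᶜ ≤ Metric.infDist (γ t) (frontier Ω) :=
        Metric.infDist_le_infDist_of_subset hfrc hfr
      refine le_trans h1.le (ENNReal.ofReal_le_ofReal ?_)
      exact mul_le_mul_of_nonneg_left h2 hc0.le
    · have : eVariationOn γ (Set.Icc t 1) ≤ eVariationOn γ (Set.Icc t₀ 1) :=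
        eVariationOn.mono γ (Set.Icc_subset_Icc_left hge)
      rw [hvar0] at this
      exact le_trans this (zero_le)
  -- t₀ < 1 and 0 < t₀
  have ht₀lt1 : t₀ < 1 := by
    rcases lt_or_eq_of_le ht₀1 with h | h
    · exact h
    · exact absurd (h ▸ hBΩ) (h1 ▸ hxnot)
  have hr₀pos : 0 < Metric.infDist x₀ (frontier Ω) := by
    rw [← IsClosed.notMem_iff_infDist_pos isClosed_frontier hfr]
    intro hmem
    exact (hfrc hmem) hx₀
  have ht₀pos : 0 < t₀ := by
    rcases lt_or_eq_of_le ht₀0 with h | h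
    · exact h
    · exfalso
      -- 0 ∈ S is impossible
      have h0S : (0:ℝ) ∈ S := h ▸ ⟨ht₀mem, hAS⟩
      have hvb : eVariationOn γ (Set.Icc (0:ℝ) 1) ≤ ENNReal.ofReal (C₁ * dist (γ 0) x) :=
        htail 0 ⟨le_refl 0, zero_le_one⟩
      have hdx : dist (γ 0) x < 2 * Metric.infDist x₀ (frontier Ω) := by
        rw [h0, dist_comm]
        exact Metric.mem_ball.1 hxball
      have hlow : Metric.infDist x₀ (frontier Ω) ≤ Metric.infDist x₀ Ωᶜ :=
        infDist_frontier_le hgeo hΩ hx₀ hcne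
      have hstrict : C₁ * dist (γ 0) x < c * Metric.infDist (γ 0) Ωᶜ := by
        rw [h0]
        calc C₁ * dist x₀ x < C₁ * (2 * Metric.infDist x₀ (frontier Ω)) := by
              rw [h0] at hdx
              exact mul_lt_mul_of_pos_left hdx hC₁0
          _ = 2 * C₁ * Metric.infDist x₀ (frontier Ω) := by ring
          _ ≤ c * Metric.infDist x₀ (frontier Ω) :=
              mul_le_mul_of_nonneg_right hc hr₀pos.le
          _ ≤ c * Metric.infDist x₀ Ωᶜ := mul_le_mul_of_nonneg_left hlow hc0.le
      have hpos : 0 < c * Metric.infDist (γ 0) Ωᶜ :=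
        lt_of_le_of_lt (mul_nonneg hC₁0.le dist_nonneg) hstrict
      have := h0S.2
      have hchain : eVariationOn γ (Set.Icc (0:ℝ) 1) <
          ENNReal.ofReal (c * Metric.infDist (γ 0) Ωᶜ) :=
        lt_of_le_of_lt hvb ((ENNReal.ofReal_lt_ofReal_iff hpos).2 hstrict)
      exact absurd this (not_le.2 hchain)
  -- final inequality
  have htail₀ : eVariationOn γ (Set.Icc t₀ 1) ≤ ENNReal.ofReal (C₁ * dist (γ t₀) x) :=
    htail t₀ ht₀mem
  have hkey : c * Metric.infDist (γ t₀) Ωᶜ ≤ C₁ * dist (γ t₀) x := by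
    have := le_trans hAS htail₀
    rwa [ENNReal.ofReal_le_ofReal_iff (mul_nonneg hC₁0.le dist_nonneg)] at this
  have hfinal : Metric.infDist (γ t₀) (frontier Ω) ≤ (C₁ / c) * dist (γ t₀) x := by
    have h2 : Metric.infDist (γ t₀) (frontier Ω) ≤ Metric.infDist (γ t₀) Ωᶜ :=
      infDist_frontier_le hgeo hΩ hBΩ hcne
    rw [div_mul_eq_mul_div, le_div_iff₀ hc0]
    calc Metric.infDist (γ t₀) (frontier Ω) * c
        ≤ Metric.infDist (γ t₀) Ωᶜ * c := mul_le_mul_of_nonneg_right h2 hc0.le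
      _ = c * Metric.infDist (γ t₀) Ωᶜ := mul_comm _ _
      _ ≤ C₁ * dist (γ t₀) x := hkey
  refine ⟨t₀, ⟨ht₀pos, ht₀lt1⟩, hBΩ, hAS, ?_, hfinal⟩
  -- John property on [0, t₀]
  refine ⟨hcont.mono (Set.Icc_subset_Icc_right ht₀1),
    lt_of_le_of_lt (eVariationOn.mono γ (Set.Icc_subset_Icc_right ht₀1)) hrect, ?_⟩
  intro t ht
  rcases lt_or_eq_of_le ht.2 with hlt | heq
  · have htmem : t ∈ Set.Icc (0:ℝ) 1 := ⟨ht.1, le_trans ht.2 ht₀1⟩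
    have h1' := hnotS t htmem hlt
    have h2 : Metric.infDist (γ t) Ωᶜ ≤ Metric.infDist (γ t) (frontier Ω) :=
      Metric.infDist_le_infDist_of_subset hfrc hfr
    calc eVariationOn γ (Set.Icc t t₀)
        ≤ eVariationOn γ (Set.Icc t 1) :=
          eVariationOn.mono γ (Set.Icc_subset_Icc_right ht₀1)
      _ ≤ ENNReal.ofReal (c * Metric.infDist (γ t) Ωᶜ) := h1'.le
      _ ≤ ENNReal.ofReal (c * Metric.infDist (γ t) (frontier Ω)) :=
          ENNReal.ofReal_le_ofReal (mul_le_mul_of_nonneg_left h2 hc0.le)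
  · subst heq
    rw [Set.Icc_self, eVariationOn.subsingleton γ Set.subsingleton_singleton]
    exact zero_le
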